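/- Let G be a group and let H be a subnormal subgroup of G of finite index. Then the set of prime divisors of the index [G : H_G] of the core of H equals the set of prime divisors of [G : H], i.e. P([G : H_G]) = P([G : H]). -/

import Mathlib

/-- A subgroup `H` of a group `G` is subnormal if there is a finite chain
`H = H_0 ≤ H_1 ≤ ⋯ ≤ H_n = G` in which each `H_{i-1}` is normal in `H_i`. -/
def IsSubnormal {G : Type*} [Group G] (H : Subgroup G) : Prop :=
  ∃ (n : ℕ) (f : Fin (n + 1) → Subgroup G),
    f 0 = H ∧ f (Fin.last n) = ⊤ ∧
    ∀ i : Fin n, f i.castSucc ≤ f i.succ ∧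
      ∀ x ∈ f i.succ, ∀ h ∈ f i.castSucc, x * h * x⁻¹ ∈ f i.castSucc

/-- If `P` is a `p`-subgroup of `T`, `N ≤ T` is stable under conjugation by `T`,
and `p` does not divide the (finite) relative index of `N` in `T`, then `P ≤ N`. -/
lemma pSubgroup_le_of_not_dvd_relindex {Q : Type*} [Group Q] {p : ℕ} (hp : p.Prime)
    {P N T : Subgroup Q} (hP : IsPGroup p P) (hPT : P ≤ T) (hNT : N ≤ T)
    (hconj : ∀ x ∈ T, ∀ h ∈ N, x * h * x⁻¹ ∈ N)
    (hrel : ¬ p ∣ N.relIndex T) (hfin : N.relIndex T ≠ 0) : P ≤ N := by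
  haveI : Fact p.Prime := ⟨hp⟩
  set N' : Subgroup T := N.subgroupOf T with hN'
  haveI : N'.Normal := by
    constructor
    intro n hn t
    rw [Subgroup.mem_subgroupOf] at hn ⊢
    exact hconj t t.2 n hn
  have hcard : Nat.card (T ⧸ N') = N.relIndex T := (Subgroup.index_eq_card N').symm
  haveI : Finite (T ⧸ N') := Nat.finite_of_card_ne_zero (hcard.trans_ne hfin)
  set P' : Subgroup T := P.subgroupOf T with hP'
  have hP'p : IsPGroup p P' := hP.of_equiv (Subgroup.subgroupOfEquivOfLe hPT).symm
  set K : Subgroup (T ⧸ N') := P'.map (QuotientGroup.mk' N') with hK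
  have hKp : IsPGroup p K := hP'p.map _
  haveI : Finite K := Subgroup.instFiniteSubtypeMem K
  obtain ⟨m, hm⟩ := (IsPGroup.iff_card (p := p) (G := K)).mp hKp
  have hdvd : Nat.card K ∣ Nat.card (T ⧸ N') := Subgroup.card_subgroup_dvd_card K
  have hm0 : m = 0 := by
    by_contra h
    exact hrel (dvd_trans (dvd_trans (dvd_pow_self p h) (hm ▸ hdvd)) hcard.dvd)
  have hKbot : K = ⊥ := Subgroup.card_eq_one.mp (by rw [hm, hm0, pow_zero])
  intro x hx
  have hx' : (⟨x, hPT hx⟩ : T) ∈ P' := by rwa [hP', Subgroup.mem_subgroupOf]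
  have hmem : QuotientGroup.mk' N' ⟨x, hPT hx⟩ ∈ K := Subgroup.mem_map_of_mem _ hx'
  rw [hKbot, Subgroup.mem_bot] at hmem
  have hxN' : (⟨x, hPT hx⟩ : T) ∈ N' := (QuotientGroup.eq_one_iff _).mp hmem
  rwa [Subgroup.mem_subgroupOf] at hxN'

lemma key_finite {Q : Type*} [Group Q] [Finite Q] {S : Subgroup Q}
    (hsub : IsSubnormal S) (hcore : S.normalCore = ⊥) {p : ℕ} (hp : p.Prime)
    (hpS : ¬ p ∣ S.index) : ¬ p ∣ Nat.card Q := by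
  haveI : Fact p.Prime := ⟨hp⟩
  obtain ⟨n, f, hf0, hflast, hchain⟩ := hsub
  -- monotonicity: f 0 ≤ f j
  have hmono : ∀ m : ℕ, (hm : m ≤ n) → f 0 ≤ f ⟨m, Nat.lt_succ_of_le hm⟩ := by
    intro m
    induction m with
    | zero => intro _; exact le_of_eq (congrArg f (Fin.ext rfl))
    | succ k ih =>
      intro hk
      refine (ih (Nat.le_of_succ_le hk)).trans ?_
      have := (hchain ⟨k, hk⟩).1
      have h1 : (⟨k, hk⟩ : Fin n).castSucc = ⟨k, Nat.lt_succ_of_le (Nat.le_of_succ_le hk)⟩ :=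
        Fin.ext rfl
      have h2 : (⟨k, hk⟩ : Fin n).succ = ⟨k + 1, Nat.lt_succ_of_le hk⟩ := Fin.ext rfl
      rwa [h1, h2] at this
  -- every p-subgroup is contained in each member from the top down
  have claim : ∀ (k : ℕ) (hk : k ≤ n) (P : Subgroup Q), IsPGroup p P →
      P ≤ f ⟨n - k, Nat.lt_succ_of_le (Nat.sub_le n k)⟩ := by
    intro k
    induction k with
    | zero =>
      intro _ P _
      have : (⟨n - 0, Nat.lt_succ_of_le (Nat.sub_le n 0)⟩ : Fin (n+1)) = Fin.last n :=
        Fin.ext (Nat.sub_zero n)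
      rw [this, hflast]; exact le_top
    | succ k ih =>
      intro hk P hPp
      have hkn : k ≤ n := Nat.le_of_succ_le hk
      set i : Fin n := ⟨n - (k + 1), by omega⟩ with hi
      have h1 : i.castSucc = ⟨n - (k + 1), Nat.lt_succ_of_le (Nat.sub_le _ _)⟩ := Fin.ext rfl
      have h2 : i.succ = ⟨n - k, Nat.lt_succ_of_le (Nat.sub_le _ _)⟩ := by
        apply Fin.ext
        rw [Fin.val_succ]
        simp only [hi]
        omega
      have hPT : P ≤ f i.succ := by rw [h2]; exact ih hkn P hPp
      have hNT := (hchain i).1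
      have hconj := (hchain i).2
      have hS_le : S ≤ f i.castSucc := by
        rw [h1, ← hf0]; exact hmono _ (Nat.sub_le _ _)
      have hST : S ≤ f i.succ := hS_le.trans hNT
      have hrel : ¬ p ∣ (f i.castSucc).relIndex (f i.succ) := by
        intro hd
        exact hpS (hd.trans ((Subgroup.relIndex_dvd_of_le_left (f i.succ) hS_le).trans
          (Subgroup.relIndex_dvd_index_of_le hST)))
      have hfin : (f i.castSucc).relIndex (f i.succ) ≠ 0 :=
        Subgroup.index_ne_zero_of_finite
      have := pSubgroup_le_of_not_dvd_relindex hp hPp hPT hNT hconj hrel hfin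
      rwa [← h1]
  have hallP : ∀ (P : Subgroup Q), IsPGroup p P → P ≤ S := by
    intro P hPp
    have := claim n le_rfl P hPp
    have h0 : (⟨n - n, Nat.lt_succ_of_le (Nat.sub_le n n)⟩ : Fin (n+1)) = 0 :=
      Fin.ext (Nat.sub_self n)
    rwa [h0, hf0] at this
  obtain ⟨P⟩ : Nonempty (Sylow p Q) := inferInstance
  have hPbot : (P : Subgroup Q) = ⊥ := by
    rw [← le_bot_iff, ← hcore]
    intro x hx b
    have : b * x * b⁻¹ ∈ Subgroup.map (MulAut.conj b).toMonoidHom (P : Subgroup Q) := by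
      refine Subgroup.mem_map_of_mem _ hx
    exact hallP _ (P.isPGroup'.map _) this
  intro hdvd
  have h1le : 1 ≤ (Nat.card Q).factorization p :=
    (hp.dvd_iff_one_le_factorization Nat.card_pos.ne').mp hdvd
  have hcard := P.card_eq_multiplicity
  rw [hPbot] at hcard
  have hb : Nat.card (⊥ : Subgroup Q) = 1 := by simp
  rw [hb] at hcard
  have h2 : 1 < p ^ ((Nat.card Q).factorization p) :=
    Nat.one_lt_pow (by omega) hp.one_lt
  exact absurd hcard.symm h2.ne'

theorem primeFactors_index_normalCore_of_subnormal {G : Type*} [Group G]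
    (H : Subgroup G) (hsub : IsSubnormal H) (hfin : H.index ≠ 0) :
    (H.normalCore).index.primeFactors = H.index.primeFactors := by
  haveI : H.FiniteIndex := ⟨hfin⟩
  have hNfin : H.normalCore.index ≠ 0 := Subgroup.FiniteIndex.index_ne_zero
  set N := H.normalCore with hN
  set π := QuotientGroup.mk' N with hπ
  have hπsurj : Function.Surjective π := QuotientGroup.mk'_surjective N
  have hker : π.ker = N := QuotientGroup.ker_mk' N
  have hkerle : π.ker ≤ H := hker.le.trans H.normalCore_le
  set S := H.map π with hS
  have hSindex : S.index = H.index := Subgroup.index_map_eq H hπsurj hkerle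
  have hQcard : Nat.card (G ⧸ N) = N.index := N.index_eq_card.symm
  haveI : Finite (G ⧸ N) := Nat.finite_of_card_ne_zero (hQcard.trans_ne hNfin)
  -- the core of S is trivial
  have hScore : S.normalCore = ⊥ := by
    have hcomap : S.normalCore.comap π ≤ N := by
      show S.normalCore.comap π ≤ H.normalCore
      haveI : (S.normalCore.comap π).Normal :=
        Subgroup.Normal.comap (Subgroup.normalCore_normal S) π
      rw [Subgroup.normal_le_normalCore]
      refine le_trans (Subgroup.comap_mono S.normalCore_le) ?_
      rw [hS, Subgroup.comap_map_eq, hker]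
      exact sup_le le_rfl H.normalCore_le
    rw [← Subgroup.map_comap_eq_self_of_surjective hπsurj S.normalCore, ← le_bot_iff]
    intro y hy
    obtain ⟨x, hx, rfl⟩ := hy
    have : x ∈ N := hcomap hx
    rw [Subgroup.mem_bot]
    exact (QuotientGroup.eq_one_iff x).mpr this
  -- S is subnormal
  have hSsub : IsSubnormal S := by
    obtain ⟨n, f, hf0, hflast, hchain⟩ := hsub
    refine ⟨n, fun i => (f i).map π, by show (f 0).map π = S; rw [hf0], ?_, ?_⟩
    · show (f (Fin.last n)).map π = ⊤
      rw [hflast, ← MonoidHom.range_eq_map, MonoidHom.range_eq_top]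
      exact hπsurj
    · intro i
      refine ⟨Subgroup.map_mono (hchain i).1, ?_⟩
      rintro x ⟨a, ha, rfl⟩ h ⟨b, hb, rfl⟩
      exact ⟨a * b * a⁻¹, (hchain i).2 a ha b hb, by simp⟩
  -- conclude
  ext p
  by_cases hp : p.Prime
  · simp only [Nat.mem_primeFactors, hp, true_and, hNfin, hfin, ne_eq,
      not_false_eq_true, and_true]
    constructor
    · intro hd
      by_contra hnd
      rw [← hSindex] at hnd
      exact key_finite hSsub hScore hp hnd (by rwa [hQcard])
    · intro hd
      exact hd.trans (Subgroup.index_dvd_of_le H.normalCore_le)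
  · simp [Nat.mem_primeFactors, hp]
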